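/- For the numerical semigroup 𝒜 = 2ℕ + 3ℕ and every a ∈ 𝒜 with a > 0, the normalized polynomial ℓ̄_{−a}(x) := ℓ_{−a}(x)/ℓ_{−a}(a), where ℓ_{−a}(x) = ∏_{b ∈ Z_{−a}(𝒜)}(x − b), takes integer values on all integers. -/

import Mathlib

open Polynomial

/-- The Apéry set `Z₋ₐ(𝒜) = {i ∈ 𝒜 | i − a ∉ 𝒜}` of `a` in `𝒜 = 2ℕ + 3ℕ = ℕ \ {1}`,
as a finset (all its elements are `≤ a + 1`). -/
noncomputable def aperyFinset (a : ℕ) : Finset ℕ :=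
  open Classical in
  (Finset.range (a + 2)).filter
    (fun i => i ≠ 1 ∧ ¬ ∃ c : ℕ, c ≠ 1 ∧ (i : ℤ) - (a : ℤ) = (c : ℤ))

/-- `ℓ₋ₐ(x) = ∏_{b ∈ Z₋ₐ(𝒜)} (x − b)`. -/
noncomputable def aperyPoly (a : ℕ) : Polynomial ℚ :=
  ∏ i ∈ aperyFinset a, (X - C (i : ℚ))

lemma aperyFinset_eq (a : ℕ) (ha : 2 ≤ a) :
    aperyFinset a = insert (a+1) ((Finset.range a).filter (fun i => i ≠ 1)) := by
  ext i
  simp only [aperyFinset, Finset.mem_filter, Finset.mem_range, Finset.mem_insert, ne_eq]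
  constructor
  · rintro ⟨h1, h2, h3⟩
    by_cases h : i < a
    · right; exact ⟨h, h2⟩
    · left
      by_contra hne
      exact h3 ⟨i - a, by omega, by omega⟩
  · rintro (rfl | ⟨h, h2⟩)
    · refine ⟨by omega, by omega, ?_⟩
      rintro ⟨c, hc, hceq⟩
      omega
    · refine ⟨by omega, h2, ?_⟩
      rintro ⟨c, hc, hceq⟩
      omega

lemma fact_dvd_prod (n : ℤ) (k : ℕ) :
    (k.factorial : ℤ) ∣ ∏ i ∈ Finset.range k, (n - i) := by
  have h : ∏ i ∈ Finset.range k, (n - i) = (descPochhammer ℤ k).eval n := by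
    induction k with
    | zero => simp
    | succ k ih =>
      rw [Finset.prod_range_succ, ih, descPochhammer_succ_right]
      simp
  refine ⟨Ring.choose n k, ?_⟩
  rw [h, eval_eq_smeval, Ring.descPochhammer_eq_factorial_smul_choose, nsmul_eq_mul]

lemma prod_eq_desc (n : ℤ) (k : ℕ) :
    ∏ i ∈ Finset.range k, (n - i) = (descPochhammer ℤ k).eval n := by
  induction k with
  | zero => simp
  | succ k ih =>
    rw [Finset.prod_range_succ, ih, descPochhammer_succ_right]
    simp

/-- The normalised polynomial `ℓ̄₋ₐ = ℓ₋ₐ / ℓ₋ₐ(a)` is integer-valued. -/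
theorem aperyPoly_integer_valued (a : ℕ) (ha : a ≠ 1) (hpos : 0 < a) :
    (aperyPoly a).eval (a : ℚ) ≠ 0 ∧
      ∀ n : ℤ, ∃ m : ℤ,
        (aperyPoly a).eval (n : ℚ) = (m : ℚ) * (aperyPoly a).eval (a : ℚ) := by
  have ha2 : 2 ≤ a := by omega
  set S : Finset ℕ := (Finset.range a).filter (fun i => i ≠ 1) with hS
  -- the integer value of the polynomial at an integer
  set L : ℤ → ℤ := fun n => (n - (a+1)) * ∏ i ∈ S, (n - (i:ℤ)) with hL
  have hnotmem : (a+1) ∉ S := by simp [hS]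
  have hevalInt : ∀ n : ℤ, (aperyPoly a).eval (n : ℚ) = ((L n : ℤ) : ℚ) := by
    intro n
    rw [aperyPoly, aperyFinset_eq a ha2, Finset.prod_insert hnotmem]
    simp only [eval_mul, eval_prod, eval_sub, eval_X, eval_C, hL]
    push_cast
    ring
  -- split off the factor (n - 0) = n and shift the rest
  have hSsplit : S = insert 0 ((Finset.range (a-2)).image (· + 2)) := by
    ext i
    simp only [hS, Finset.mem_filter, Finset.mem_range, Finset.mem_insert, Finset.mem_image]
    constructor
    · rintro ⟨h1, h2⟩
      rcases Nat.eq_zero_or_pos i with rfl | hi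
      · exact Or.inl rfl
      · exact Or.inr ⟨i - 2, by omega, by omega⟩
    · rintro (rfl | ⟨x, hx, rfl⟩) <;> omega
  have hProdS : ∀ n : ℤ, ∏ i ∈ S, (n - (i:ℤ))
      = n * ∏ j ∈ Finset.range (a-2), ((n - 2) - j) := by
    intro n
    rw [hSsplit, Finset.prod_insert (by simp), Finset.prod_image (by intro x _ y _ h; simp only at h; omega)]
    rw [Nat.cast_zero, sub_zero]
    congr 1
    apply Finset.prod_congr rfl
    intro j _
    push_cast
    ring
  -- the key constant K
  set K : ℤ := (a : ℤ) * ((a-2).factorial : ℤ) with hK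
  obtain ⟨b, rfl⟩ : ∃ b, a = b + 2 := ⟨a - 2, by omega⟩
  simp only [Nat.add_sub_cancel] at hProdS hK
  have hKfact : K ∣ ((b+2).factorial : ℤ) := by
    have : ((b+2).factorial : ℤ) = ((b+2) : ℤ) * (b+1) * (b.factorial : ℤ) := by
      simp [Nat.factorial_succ]
      ring
    rw [this, hK]
    exact ⟨(b:ℤ)+1, by push_cast; ring⟩
  have hdvd : ∀ n : ℤ, K ∣ L n := by
    intro n
    have h1 : K ∣ (n - 1) * ∏ i ∈ S, (n - (i:ℤ)) := by
      refine dvd_trans hKfact (Dvd.dvd.trans (fact_dvd_prod n (b+2)) ?_)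
      have : ∏ i ∈ Finset.range (b+2), (n - (i:ℤ))
          = (∏ i ∈ S, (n - (i:ℤ))) * (n - 1) := by
        have h1m : (1:ℕ) ∈ Finset.range (b+2) := by simp
        rw [hS, Finset.filter_ne', ← Finset.prod_erase_mul _ _ h1m, Nat.cast_one]
      rw [this]
      exact ⟨1, by ring⟩
    have h2 : K ∣ ((b:ℤ)+2) * ∏ i ∈ S, (n - (i:ℤ)) := by
      rw [hProdS n]
      have : ((b).factorial : ℤ) ∣ n * ∏ j ∈ Finset.range b, ((n - 2) - j) := by
        simpa using Dvd.dvd.mul_left (fact_dvd_prod (n-2) b) n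
      have := mul_dvd_mul_left ((b:ℤ)+2) this
      simpa [hK, mul_comm, mul_assoc, mul_left_comm] using this
    have : L n = (n - 1) * (∏ i ∈ S, (n - (i:ℤ))) - ((b:ℤ)+2) * ∏ i ∈ S, (n - (i:ℤ)) := by
      rw [hL]; push_cast; ring
    rw [this]
    exact dvd_sub h1 h2
  -- value at a
  have hLa : L ((b:ℤ)+2) = -K := by
    rw [hL]
    simp only
    rw [hProdS]
    have : ∏ j ∈ Finset.range b, (((b:ℤ)+2) - 2 - j) = (b.factorial : ℤ) := by
      have := prod_eq_desc ((b:ℤ)) b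
      rw [eval_eq_smeval] at this
      rw [descPochhammer_smeval_eq_descFactorial, Nat.descFactorial_self] at this
      rw [← this]
      apply Finset.prod_congr rfl
      intro j _
      ring
    rw [this, hK]
    push_cast
    ring
  have hevala : (aperyPoly (b+2)).eval ((b+2 : ℕ) : ℚ) = ((-K : ℤ) : ℚ) := by
    have := hevalInt ((b:ℤ)+2)
    rw [hLa] at this
    rw [← this]
    norm_num
  constructor
  · rw [hevala]
    have : K ≠ 0 := by
      rw [hK]
      positivity
    simpa using this
  · intro n
    obtain ⟨m, hm⟩ := hdvd n
    refine ⟨-m, ?_⟩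
    rw [hevalInt n, hm, hevala]
    push_cast
    ring
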